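/- (Shift transformation preserves K and M and increases H̃) Let Λ be a finite set containing distinct elements λ₁, λ₃, let {p(·|i)}_{i=1}^{4} be probability distributions on Λ, and let 0 ≤ p ≤ min_i p(λ₁|i). Define q(λ₁|i) = p(λ₁|i) − p, q(λ₃|i) = p(λ₃|i) + p, and q(λ|i) = p(λ|i) otherwise. If additionally max_λ Σ_i p(λ|i) = Σ_i p(λ₃|i) and min_i p(λ₁|i) = p, then Σ_λ min_i q(λ|i) = Σ_λ min_i p(λ|i), max_{i,j} Σ_λ |q(λ|i) − q(λ|j)| = max_{i,j} Σ_λ |p(λ|i) − p(λ|j)|, and max_λ Σ_i q(λ|i) = max_λ Σ_i p(λ|i) + 4p. -/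

import Mathlib

/-- Measurement dependence `M = max_{i,j} Σ_λ |p(λ|i) − p(λ|j)|`. -/
noncomputable def measDep {Λ : Type*} [Fintype Λ] (p : Λ → Fin 4 → ℝ) : ℝ :=
  (Finset.univ : Finset (Fin 4 × Fin 4)).sup' ⟨(0,0), Finset.mem_univ _⟩
    (fun ij => ∑ l, |p l ij.1 - p l ij.2|)

/-- `H̃ = max_λ Σ_i p(λ|i)`. -/
noncomputable def hidW {Λ : Type*} [Fintype Λ] [Nonempty Λ] (p : Λ → Fin 4 → ℝ) : ℝ :=
  (Finset.univ : Finset Λ).sup' Finset.univ_nonempty (fun l => ∑ i, p l i)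

/-- Hiddenness `H = 1 − (1/4)·max_λ Σ_i p(λ|i)`. -/
noncomputable def hiddenness {Λ : Type*} [Fintype Λ] [Nonempty Λ] (p : Λ → Fin 4 → ℝ) : ℝ :=
  1 - (1/4) * hidW p

/-- `K = Σ_λ min_i p(λ|i)`. -/
noncomputable def kVal {Λ : Type*} [Fintype Λ] (p : Λ → Fin 4 → ℝ) : ℝ :=
  ∑ l, (Finset.univ : Finset (Fin 4)).inf' ⟨0, Finset.mem_univ _⟩ (p l)

/-- Optimal CHSH value `S_opt = 4 − 2K`. -/
noncomputable def sOpt {Λ : Type*} [Fintype Λ] (p : Λ → Fin 4 → ℝ) : ℝ :=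
  4 - 2 * kVal p

/-- The shifted table: row `l₁` is decreased by `c`, row `l₃` is increased by `c`. -/
noncomputable def shiftTable {Λ : Type*} [DecidableEq Λ] (p : Λ → Fin 4 → ℝ)
    (l₁ l₃ : Λ) (c : ℝ) : Λ → Fin 4 → ℝ :=
  fun l i => if l = l₁ then p l i - c else if l = l₃ then p l i + c else p l i

private lemma inf'_add_const {n : ℕ} (f : Fin n → ℝ) (a : ℝ)
    (H : (Finset.univ : Finset (Fin n)).Nonempty) :
    Finset.univ.inf' H (fun i => f i + a) = Finset.univ.inf' H f + a := by
  apply le_antisymm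
  · obtain ⟨i, _, hi⟩ := Finset.exists_mem_eq_inf' H f
    calc Finset.univ.inf' H (fun i => f i + a) ≤ f i + a :=
          Finset.inf'_le _ (Finset.mem_univ i)
      _ = _ := by rw [hi]
  · apply Finset.le_inf'
    intro i _
    exact add_le_add (Finset.inf'_le f (Finset.mem_univ i)) (le_refl a)

theorem stmt_18 {Λ : Type*} [Fintype Λ] [Nonempty Λ] [DecidableEq Λ]
    (p : Λ → Fin 4 → ℝ) (l₁ l₃ : Λ) (hne : l₁ ≠ l₃) (c : ℝ) (hc : 0 ≤ c)
    (hpos : ∀ l i, 0 ≤ p l i) (hsum : ∀ i, ∑ l, p l i = 1)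
    (hmax : hidW p = ∑ i, p l₃ i)
    (hmin : (Finset.univ : Finset (Fin 4)).inf' ⟨0, Finset.mem_univ _⟩ (p l₁) = c) :
    kVal (shiftTable p l₁ l₃ c) = kVal p ∧
    measDep (shiftTable p l₁ l₃ c) = measDep p ∧
    hidW (shiftTable p l₁ l₃ c) = hidW p + 4 * c := by
  set q := shiftTable p l₁ l₃ c with hq
  have hq1 : ∀ i, q l₁ i = p l₁ i - c := fun i => by simp [hq, shiftTable]
  have hq3 : ∀ i, q l₃ i = p l₃ i + c := fun i => by
    simp [hq, shiftTable, hne.symm]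
  have hqo : ∀ l, l ≠ l₁ → l ≠ l₃ → ∀ i, q l i = p l i := fun l h1 h3 i => by
    simp [hq, shiftTable, h1, h3]
  refine ⟨?_, ?_, ?_⟩
  · -- kVal
    have key : ∀ l, (Finset.univ : Finset (Fin 4)).inf' ⟨0, Finset.mem_univ _⟩ (q l)
        = (Finset.univ : Finset (Fin 4)).inf' ⟨0, Finset.mem_univ _⟩ (p l)
          + (if l = l₁ then -c else if l = l₃ then c else 0) := by
      intro l
      by_cases h1 : l = l₁
      · simp only [h1, if_pos rfl]
        rw [show q l₁ = fun i => p l₁ i + (-c) from funext fun i => by rw [hq1]; ring]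
        exact inf'_add_const _ _ _
      · by_cases h3 : l = l₃
        · simp only [h3, if_neg (h3 ▸ h1 : l₃ ≠ l₁), if_pos rfl]
          rw [show q l₃ = fun i => p l₃ i + c from funext fun i => hq3 i]
          exact inf'_add_const _ _ _
        · simp only [if_neg h1, if_neg h3, add_zero]
          congr 1
          exact funext (hqo l h1 h3)
    unfold kVal
    rw [Finset.sum_congr rfl (fun l _ => key l), Finset.sum_add_distrib]
    have hfun : ∀ l : Λ, (if l = l₁ then -c else if l = l₃ then c else 0)
        = (if l = l₁ then -c else 0) + (if l = l₃ then c else 0) := by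
      intro l
      by_cases h1 : l = l₁
      · simp [h1, hne]
      · by_cases h3 : l = l₃ <;> simp [h1, h3, Ne.symm hne]
    rw [Finset.sum_congr rfl (fun l _ => hfun l), Finset.sum_add_distrib]
    simp [Finset.sum_ite_eq']
  · -- measDep
    have key : ∀ l i j, q l i - q l j = p l i - p l j := by
      intro l i j
      by_cases h1 : l = l₁
      · subst h1; rw [hq1, hq1]; ring
      · by_cases h3 : l = l₃
        · subst h3; rw [hq3, hq3]; ring
        · rw [hqo l h1 h3, hqo l h1 h3]
    unfold measDep
    apply Finset.sup'_congr _ rfl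
    intro ij _
    exact Finset.sum_congr rfl fun l _ => by rw [key]
  · -- hidW
    have h3 : ∑ i, q l₃ i = hidW p + 4 * c := by
      rw [Finset.sum_congr rfl fun i _ => hq3 i, Finset.sum_add_distrib, hmax]
      norm_num
    have hub : ∀ l, ∑ i, q l i ≤ hidW p + 4 * c := by
      intro l
      by_cases h1 : l = l₁
      · rw [h1]
        have h1' : ∑ i, q l₁ i = ∑ i, p l₁ i - 4 * c := by
          rw [Finset.sum_congr rfl fun i _ => hq1 i, Finset.sum_sub_distrib]
          norm_num
        have hle : ∑ i, p l₁ i ≤ hidW p :=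
          Finset.le_sup' (fun l => ∑ i, p l i) (Finset.mem_univ l₁)
        linarith
      · by_cases hl3 : l = l₃
        · rw [hl3, h3]
        · rw [Finset.sum_congr rfl fun i _ => hqo l h1 hl3 i]
          have hle : ∑ i, p l i ≤ hidW p :=
            Finset.le_sup' (fun l => ∑ i, p l i) (Finset.mem_univ l)
          linarith
    apply le_antisymm
    · exact Finset.sup'_le _ _ fun l _ => hub l
    · calc hidW p + 4 * c = ∑ i, q l₃ i := h3.symm
        _ ≤ _ := Finset.le_sup' (fun l => ∑ i, q l i) (Finset.mem_univ l₃)
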